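/- Let K ≥ 2 and let e_1 ≤ e_2 ≤ ⋯ ≤ e_K be values in [0,∞] sorted in ascending order. Let F be a function on finite multisets of values in [0,∞] that is symmetric and increasing in each argument, and define D_{e,F}^R(j) := min_{I ⊆ {1,…,K} : |R \ I| < j} F(e_k : k ∈ I) with min ∅ := ∞. For r ∈ {1,…,K} let R_r := {K−r+1, …, K} be the set of the r indices with the largest e-values. Then for every r, every rejection set R ⊆ {1,…,K} with |R| = r, and every positive integer j, D_{e,F}^R(j) ≤ D_{e,F}^{R_r}(j); that is, R_r is the optimal rejection set of size r. -/

import Mathlib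

open scoped ENNReal

noncomputable def Dinf {K : ℕ} (e : Fin K → ℝ≥0∞) (F : Multiset ℝ≥0∞ → ℝ≥0∞)
    (j : ℕ) (R : Finset (Fin K)) : ℝ≥0∞ :=
  ⨅ I ∈ {I : Finset (Fin K) | (R \ I).card < j}, F (I.val.map e)

lemma exchange {K : ℕ} (e : Fin K → ℝ≥0∞) (F : Multiset ℝ≥0∞ → ℝ≥0∞)
    (hF : ∀ s t : Multiset ℝ≥0∞, Multiset.Rel (· ≤ ·) s t → F s ≤ F t)
    (j : ℕ) (R : Finset (Fin K)) (x y : Fin K) (hx : x ∈ R) (hy : y ∉ R)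
    (hxy : e x ≤ e y) :
    Dinf e F j R ≤ Dinf e F j (insert y (R.erase x)) := by
  refine le_iInf₂ fun I hI => ?_
  simp only [Set.mem_setOf_eq] at hI
  by_cases hyI : y ∈ I
  · by_cases hxI : x ∈ I
    · refine iInf₂_le_of_le I ?_ le_rfl
      refine lt_of_le_of_lt (Finset.card_le_card ?_) hI
      intro z hz
      simp only [Finset.mem_sdiff, Finset.mem_insert, Finset.mem_erase] at hz ⊢
      exact ⟨Or.inr ⟨fun h => hz.2 (h ▸ hxI), hz.1⟩, hz.2⟩
    · have hxe : x ∉ I.erase y := fun h => hxI (Finset.mem_of_mem_erase h)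
      refine iInf₂_le_of_le (insert x (I.erase y)) ?_ ?_
      · refine lt_of_le_of_lt (Finset.card_le_card ?_) hI
        intro z hz
        simp only [Finset.mem_sdiff, Finset.mem_insert, Finset.mem_erase] at hz ⊢
        obtain ⟨hzR, hz2⟩ := hz
        push_neg at hz2
        obtain ⟨hzx, hz3⟩ := hz2
        have hzy : z ≠ y := fun h => hy (h ▸ hzR)
        exact ⟨Or.inr ⟨hzx, hzR⟩, hz3 hzy⟩
      · have h1 : (insert x (I.erase y)).val = x ::ₘ (I.val.erase y) := by
          rw [Finset.insert_val_of_notMem hxe, Finset.erase_val]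
        have h2 : I.val = y ::ₘ (I.val.erase y) := (Multiset.cons_erase hyI).symm
        refine hF _ _ ?_
        have hrel : Multiset.Rel (· ≤ ·) (Multiset.map e (x ::ₘ I.val.erase y))
            (Multiset.map e (y ::ₘ I.val.erase y)) := by
          rw [Multiset.map_cons, Multiset.map_cons]
          exact Multiset.Rel.cons hxy (Multiset.rel_refl_of_refl_on fun _ _ => le_rfl)
        rw [Multiset.cons_erase hyI] at hrel
        rwa [h1]
  · refine iInf₂_le_of_le I ?_ le_rfl
    refine lt_of_le_of_lt (Finset.card_le_card_of_injOn
      (fun z => if z = x then y else z) ?_ ?_) hI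
    · intro z hz
      simp only [Finset.mem_coe, Finset.mem_sdiff] at hz
      by_cases hzx : z = x
      · simp only [hzx, if_pos rfl, Finset.mem_coe, Finset.mem_sdiff, Finset.mem_insert]
        exact ⟨Or.inl rfl, hyI⟩
      · simp only [if_neg hzx, Finset.mem_coe, Finset.mem_sdiff, Finset.mem_insert, Finset.mem_erase]
        exact ⟨Or.inr ⟨hzx, hz.1⟩, hz.2⟩
    · intro a ha b hb hab
      simp only [Finset.coe_sdiff, Set.mem_diff, Finset.mem_coe] at ha hb
      simp only at hab
      by_cases hax : a = x <;> by_cases hbx : b = x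
      · rw [hax, hbx]
      · rw [if_pos hax, if_neg hbx] at hab
        exact absurd (hab ▸ hb.1) hy
      · rw [if_pos hbx, if_neg hax] at hab
        exact absurd (hab ▸ ha.1) hy
      · rwa [if_neg hax, if_neg hbx] at hab

lemma key {K : ℕ} (e : Fin K → ℝ≥0∞) (hmono : Monotone e)
    (F : Multiset ℝ≥0∞ → ℝ≥0∞)
    (hF : ∀ s t : Multiset ℝ≥0∞, Multiset.Rel (· ≤ ·) s t → F s ≤ F t)
    (j : ℕ) (Rt : Finset (Fin K))
    (hup : ∀ x y : Fin K, x ∉ Rt → y ∈ Rt → e x ≤ e y) :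
    ∀ (n : ℕ) (R : Finset (Fin K)), (Rt \ R).card = n → R.card = Rt.card →
      Dinf e F j R ≤ Dinf e F j Rt := by
  intro n
  induction n with
  | zero =>
    intro R h0 hcard
    have hsub : Rt ⊆ R := by
      intro z hz
      by_contra hzR
      have : z ∈ Rt \ R := Finset.mem_sdiff.2 ⟨hz, hzR⟩
      simp [Finset.card_eq_zero.1 h0] at this
    have : R = Rt := (Finset.eq_of_subset_of_card_le hsub (le_of_eq hcard)).symm
    rw [this]
  | succ n ih =>
    intro R h0 hcard
    have hy : (Rt \ R).Nonempty := Finset.card_pos.1 (by omega)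
    obtain ⟨y, hymem⟩ := hy
    have hyRt : y ∈ Rt := (Finset.mem_sdiff.1 hymem).1
    have hyR : y ∉ R := (Finset.mem_sdiff.1 hymem).2
    have hx : (R \ Rt).Nonempty := by
      rw [← Finset.card_pos, Finset.card_sdiff_comm hcard]
      omega
    obtain ⟨x, hxmem⟩ := hx
    have hxR : x ∈ R := (Finset.mem_sdiff.1 hxmem).1
    have hxRt : x ∉ Rt := (Finset.mem_sdiff.1 hxmem).2
    set R'' := insert y (R.erase x) with hR''
    have hyRe : y ∉ R.erase x := fun h => hyR (Finset.mem_of_mem_erase h)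
    have hcard'' : R''.card = Rt.card := by
      rw [hR'', Finset.card_insert_of_notMem hyRe, Finset.card_erase_of_mem hxR]
      have : 1 ≤ R.card := Finset.card_pos.2 ⟨x, hxR⟩
      omega
    have hsd : Rt \ R'' = (Rt \ R).erase y := by
      ext z
      simp only [Finset.mem_sdiff, hR'', Finset.mem_insert, Finset.mem_erase]
      constructor
      · rintro ⟨hzt, hz2⟩
        push_neg at hz2
        exact ⟨hz2.1, hzt, hz2.2 (fun h => hxRt (h ▸ hzt))⟩
      · rintro ⟨hzy, hzt, hzR⟩
        refine ⟨hzt, ?_⟩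
        push_neg
        exact ⟨hzy, fun _ => hzR⟩
    have hsdcard : (Rt \ R'').card = n := by
      rw [hsd, Finset.card_erase_of_mem hymem, h0]
      omega
    exact le_trans (exchange e F hF j R x y hxR hyR (hup x y hxRt hyRt))
      (ih R'' hsdcard hcard'')

/-- Optimality of the rejection set consisting of the `r` largest e-values:
if `e` is sorted in ascending order and `F` is symmetric (it acts on multisets)
and increasing in each argument, then for the set `R_r` of the `r` indices with
the largest e-values (the top `r` indices of `Fin K`) and any rejection set `R`
of size `r`, `D_{e,F}^R(j) ≤ D_{e,F}^{R_r}(j)` for every positive `j`. -/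
theorem top_rejection_set_optimal
    (K : ℕ) (hK : 2 ≤ K) (e : Fin K → ℝ≥0∞) (hmono : Monotone e)
    (F : Multiset ℝ≥0∞ → ℝ≥0∞)
    (hF : ∀ s t : Multiset ℝ≥0∞, Multiset.Rel (· ≤ ·) s t → F s ≤ F t)
    (r : ℕ) (hr1 : 1 ≤ r) (hrK : r ≤ K)
    (R : Finset (Fin K)) (hR : R.card = r) (j : ℕ) (hj : 0 < j) :
    (⨅ I ∈ {I : Finset (Fin K) | (R \ I).card < j}, F (I.val.map e)) ≤
      ⨅ I ∈ {I : Finset (Fin K) |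
          ((Finset.univ.filter (fun i : Fin K => K - r ≤ (i : ℕ))) \ I).card < j},
        F (I.val.map e) := by
  set Rt : Finset (Fin K) := Finset.univ.filter (fun i : Fin K => K - r ≤ (i : ℕ)) with hRt
  have hcardRt : Rt.card = r := by
    rw [hRt]
    have : (Finset.univ.filter (fun i : Fin K => K - r ≤ (i : ℕ))).card
        = (Finset.Ico (K - r) K).card := by
      refine Finset.card_bij (fun i _ => (i : ℕ)) ?_ ?_ ?_
      · intro i hi
        simp only [Finset.mem_filter] at hi
        exact Finset.mem_Ico.2 ⟨hi.2, i.isLt⟩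
      · intro a ha b hb hab
        exact Fin.ext hab
      · intro m hm
        obtain ⟨h1, h2⟩ := Finset.mem_Ico.1 hm
        exact ⟨⟨m, h2⟩, by simp only [Finset.mem_filter, Finset.mem_univ, true_and]; exact h1, rfl⟩
    rw [this, Nat.card_Ico]
    omega
  have hup : ∀ x y : Fin K, x ∉ Rt → y ∈ Rt → e x ≤ e y := by
    intro x y hxn hyn
    simp only [hRt, Finset.mem_filter, Finset.mem_univ, true_and, not_le] at hxn hyn
    exact hmono (by rw [Fin.le_def]; omega)
  exact key e hmono F hF j Rt hup (Rt \ R).card R rfl (by rw [hcardRt, hR])
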